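/- arXiv:2510.18567 — 4 statements merged into one kernel-verified Lean document; each statement's English description precedes it below -/
import Mathlib

section
/- Let Δ > 0 and c_min ≥ 1/4 be real numbers such that X := (4·c_min − 1)/(4Δ) ≥ 1/2. Then for every real x with X ≤ x ≤ 1, one has (1 + 4Δx)/(4·c_min) ≥ 1 and 1/4 − (1 − x)·(1/2) ≥ (1/(8Δ))·log((1 + 4Δx)/(4·c_min)). -/
/-- Potential-function step in Case (ii) of Lemma 3.5: the immediate regret dominates
(1/(8Δ)) times the logarithm of the shrinkage factor of the hypothesis set. -/
theorem stmt3 (Δ cmin : ℝ) (hΔ : 0 < Δ) (hc : cmin ≥ 1/4)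
    (X : ℝ) (hX : X = (4 * cmin - 1) / (4 * Δ)) (hXhalf : X ≥ 1/2) :
    ∀ x : ℝ, X ≤ x → x ≤ 1 →
      (1 + 4*Δ*x) / (4*cmin) ≥ 1 ∧
      1/4 - (1 - x) * (1/2) ≥ (1/(8*Δ)) * Real.log ((1 + 4*Δ*x) / (4*cmin)) := by
  have hΔ' : (4:ℝ) * Δ ≠ 0 := by positivity
  have hc4 : 4 * cmin = 1 + 4 * Δ * X := by
    field_simp at hX; nlinarith [hX]
  have hcp : (0:ℝ) < 4 * cmin := by linarith
  intro x hx1 hx2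
  have hr1 : (1 + 4*Δ*x) / (4*cmin) ≥ 1 := by
    rw [ge_iff_le, le_div_iff₀ hcp]; nlinarith
  refine ⟨hr1, ?_⟩
  have hrpos : (0:ℝ) < (1 + 4*Δ*x) / (4*cmin) := lt_of_lt_of_le one_pos hr1
  have hlog := Real.log_le_sub_one_of_pos hrpos
  have h8 : (0:ℝ) < 1/(8*Δ) := by positivity
  have step1 : (1/(8*Δ)) * Real.log ((1 + 4*Δ*x) / (4*cmin))
      ≤ (1/(8*Δ)) * ((1 + 4*Δ*x) / (4*cmin) - 1) :=
    mul_le_mul_of_nonneg_left hlog (le_of_lt h8)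
  have step2 : (1/(8*Δ)) * ((1 + 4*Δ*x) / (4*cmin) - 1) ≤ 1/4 - (1 - x) * (1/2) := by
    have heq : (1/(8*Δ)) * ((1 + 4*Δ*x) / (4*cmin) - 1) = (x - X) / (8 * cmin) := by
      field_simp; linear_combination (-1) * hc4
    rw [heq, div_le_iff₀ (by linarith : (0:ℝ) < 8 * cmin)]
    nlinarith [mul_nonneg (mul_nonneg (le_of_lt hΔ) (by linarith : (0:ℝ) ≤ X)) (by linarith : (0:ℝ) ≤ 2*x - 1)]
  linarith
end

section
/- Let Δ be real with 0 < Δ ≤ 1/8, let e = exp 1 denote Euler's number, set s = √(4Δ² + 28Δ + 1) and γ = (3 + 2Δ + s)/(8e). Then x⁽²⁾ := 8Δ/(2Δ + s − 1) satisfies x⁽²⁾·(1/(2e)) − 1/(4e) = x⁽²⁾·γ − (1/(4e) + Δ/e), and x⁽²⁾ ≥ 1/2 + 3Δ − 24Δ². -/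
/-- Critical-points lemma of the reward-context known-action instance. -/
theorem stmt10 (Δ : ℝ) (hΔ : 0 < Δ) (hΔ8 : Δ ≤ 1/8) (e : ℝ) (he : e = Real.exp 1)
    (s : ℝ) (hs : s = Real.sqrt (4*Δ^2 + 28*Δ + 1))
    (γ : ℝ) (hγ : γ = (3 + 2*Δ + s)/(8*e)) :
    (8*Δ/(2*Δ + s - 1)) * (1/(2*e)) - 1/(4*e)
      = (8*Δ/(2*Δ + s - 1)) * γ - (1/(4*e) + Δ/e) ∧
    8*Δ/(2*Δ + s - 1) ≥ 1/2 + 3*Δ - 24*Δ^2 := by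
  have he0 : 0 < e := he ▸ Real.exp_pos 1
  have hsq : s^2 = 4*Δ^2 + 28*Δ + 1 := by
    rw [hs, Real.sq_sqrt]; nlinarith
  have hsnn : 0 ≤ s := hs ▸ Real.sqrt_nonneg _
  have hs1 : 1 < s := by nlinarith
  have hden : 0 < 2*Δ + s - 1 := by linarith
  constructor
  · rw [hγ]
    obtain ⟨D, hDdef⟩ : ∃ D, D = 2*Δ + s - 1 := ⟨_, rfl⟩
    have hD0 : D ≠ 0 := by rw [hDdef]; exact hden.ne'
    have hsD : s = D + 1 - 2*Δ := by linarith
    rw [← hDdef, hsD]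
    field_simp
    ring
  · rw [ge_iff_le, le_div_iff₀ hden]
    have hp : 0 < 1/2 + 3*Δ - 24*Δ^2 := by nlinarith
    set p : ℝ := 1/2 + 3*Δ - 24*Δ^2 with hpdef
    have hR : 0 < 8*Δ + p - 2*p*Δ := by nlinarith
    have h4 : 0 ≤ Δ^4 * (7 - 24*Δ) :=
      mul_nonneg (by positivity) (by linarith)
    have key : (p*s)^2 ≤ (8*Δ + p - 2*p*Δ)^2 := by
      rw [mul_pow, hsq, hpdef]; nlinarith [h4]
    have hps : 0 ≤ p * s := mul_nonneg hp.le hsnn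
    have hsum : 0 < p*s + (8*Δ + p - 2*p*Δ) := by linarith
    have hfin : p*s ≤ 8*Δ + p - 2*p*Δ := by nlinarith [key, hsum]
    nlinarith [hfin]
end

section
/- Let Ā be a finite set, r̄ : Ā → ℝ, c̄ : Ā → ℝ, and c₀ ∈ ℝ. For ρ ∈ ℝ define Π(ρ) = sup {(1 − x)·ρ : x ∈ [0,1], ∀ ā ∈ Ā, x·ρ − c₀ ≥ x·r̄(ā) − c̄(ā)} (with the convention sup ∅ = 0). Then for all real numbers ρ, ρ' with 0 ≤ ρ ≤ ρ', one has Π(ρ) ≤ Π(ρ'). -/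
/-- Lemma 'monotone reward profit' (lem:monotone reward profit). -/
theorem stmt15 {A : Type*} [Fintype A] (rbar cbar : A → ℝ) (c₀ : ℝ)
    (P : ℝ → ℝ)
    (hPdef : ∀ ρ : ℝ, P ρ = sSup ((fun x : ℝ => (1 - x) * ρ) ''
      {x : ℝ | x ∈ Set.Icc (0:ℝ) 1 ∧
        ∀ a : A, x * ρ - c₀ ≥ x * rbar a - cbar a})) :
    ∀ ρ ρ' : ℝ, 0 ≤ ρ → ρ ≤ ρ' → P ρ ≤ P ρ' := by
  intro ρ ρ' hρ hle
  have hρ' : (0:ℝ) ≤ ρ' := le_trans hρ hle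
  set S' : Set ℝ := (fun x : ℝ => (1 - x) * ρ') ''
      {x : ℝ | x ∈ Set.Icc (0:ℝ) 1 ∧
        ∀ a : A, x * ρ' - c₀ ≥ x * rbar a - cbar a} with hS'
  have hbdd : BddAbove S' := by
    refine ⟨ρ', ?_⟩
    rintro y ⟨x, ⟨⟨hx0, hx1⟩, _⟩, rfl⟩
    dsimp only
    have : (1 - x) * ρ' ≤ 1 * ρ' := by
      apply mul_le_mul_of_nonneg_right (by linarith) hρ'
    linarith
  have hnonneg : ∀ y ∈ S', (0:ℝ) ≤ y := by
    rintro y ⟨x, ⟨⟨hx0, hx1⟩, _⟩, rfl⟩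
    dsimp only
    exact mul_nonneg (by linarith) hρ'
  have hsup0 : (0:ℝ) ≤ sSup S' := by
    rcases Set.eq_empty_or_nonempty S' with h | ⟨y, hy⟩
    · rw [h, Real.sSup_empty]
    · exact le_trans (hnonneg y hy) (le_csSup hbdd hy)
  rw [hPdef ρ, hPdef ρ']
  apply Real.sSup_le _ hsup0
  rintro y ⟨x, ⟨⟨hx0, hx1⟩, hfeas⟩, rfl⟩
  dsimp only
  have hmem : (1 - x) * ρ' ∈ S' := by
    refine ⟨x, ⟨⟨hx0, hx1⟩, fun a => ?_⟩, rfl⟩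
    have := hfeas a
    have : x * ρ ≤ x * ρ' := mul_le_mul_of_nonneg_left hle hx0
    linarith [hfeas a]
  calc (1 - x) * ρ ≤ (1 - x) * ρ' := mul_le_mul_of_nonneg_left hle (by linarith)
    _ ≤ sSup S' := le_csSup hbdd hmem
end

section
/- Let A⁻ be a nonempty finite set, r : A⁻ → ℝ and c : A⁻ → ℝ, and let Δ > 0 and c* ∈ ℝ satisfy c* − c(a) ≥ Δ for all a ∈ A⁻. Define φ(x) = ((max_{a ∈ A⁻}(x·r(a) − c(a))) + c*)/x for x > 0. Then for all real x₁, x₂ with 0 < x₁ ≤ x₂ ≤ 1, one has φ(x₂) ≤ φ(x₁) − Δ·(x₂ − x₁). -/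
/-- One-sided Lipschitz decrease of the min-pay reward function φ, the core of
Lemmas 'contract distance case i' and 'contract distance case ii'. -/
theorem stmt18 {A : Type*} [Fintype A] [Nonempty A] (r c : A → ℝ)
    (Δ cstar : ℝ) (hΔ : 0 < Δ) (hgap : ∀ a : A, cstar - c a ≥ Δ)
    (φ : ℝ → ℝ)
    (hφ : ∀ x : ℝ, 0 < x →
      φ x = ((Finset.univ.sup' Finset.univ_nonempty (fun a : A => x * r a - c a))
              + cstar) / x) :
    ∀ x₁ x₂ : ℝ, 0 < x₁ → x₁ ≤ x₂ → x₂ ≤ 1 → φ x₂ ≤ φ x₁ - Δ * (x₂ - x₁) := by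
  intro x₁ x₂ h1 h12 h21
  have h2 : 0 < x₂ := lt_of_lt_of_le h1 h12
  rw [hφ x₁ h1, hφ x₂ h2]
  obtain ⟨a, -, ha⟩ := Finset.exists_mem_eq_sup' (Finset.univ_nonempty)
    (fun a : A => x₂ * r a - c a)
  have hU1 : x₁ * r a - c a ≤
      Finset.univ.sup' Finset.univ_nonempty (fun a : A => x₁ * r a - c a) :=
    Finset.le_sup' (fun a : A => x₁ * r a - c a) (Finset.mem_univ a)
  have key : (x₂ * r a - c a + cstar) / x₂ ≤
      (x₁ * r a - c a + cstar) / x₁ - Δ * (x₂ - x₁) := by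
    have hgapa := hgap a
    have hx12 : x₁ * x₂ ≤ 1 := by nlinarith
    rw [div_sub' (ne_of_gt h1), div_le_div_iff₀ h2 h1]
    nlinarith [mul_pos h1 h2, sub_nonneg.mpr h12,
      mul_le_mul_of_nonneg_left hx12 (mul_nonneg hΔ.le (sub_nonneg.mpr h12))]
  calc (Finset.univ.sup' Finset.univ_nonempty (fun a : A => x₂ * r a - c a) + cstar) / x₂
      = (x₂ * r a - c a + cstar) / x₂ := by rw [ha]
    _ ≤ (x₁ * r a - c a + cstar) / x₁ - Δ * (x₂ - x₁) := key
    _ ≤ (Finset.univ.sup' Finset.univ_nonempty (fun a : A => x₁ * r a - c a) + cstar) / x₁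
        - Δ * (x₂ - x₁) := by
        gcongr
end
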